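/- Let 1 < p < ∞ and 1 < C₁ ≤ C₂ < ∞. For h(z) = 1/(1−z) and the Taylor polynomial block S_{n₁,n₂}h(z) = Σ_{k=n₁}^{n₂−1} z^k, one has ‖S_{n₁,n₂}h‖_{H^p} ≍ n₂^{1−1/p} uniformly for all natural numbers n₁ < n₂ with C₁ ≤ n₂/n₁ ≤ C₂; that is, there are constants depending only on p, C₁, C₂ bounding the ratio above and below. -/

import Mathlib

open MeasureTheory Real intervalIntegral

/-- The integral mean `M_p(r, f)`. -/
noncomputable def meanMp (p : ℝ) (f : ℂ → ℂ) (r : ℝ) : ℝ :=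
  ((1 / (2 * π)) * ∫ θ in (0:ℝ)..2 * π,
      ‖f ((r:ℂ) * Complex.exp (θ * Complex.I))‖ ^ p) ^ (1 / p)

/-- The Hardy space norm `‖f‖_{H^p} = sup_{0<r<1} M_p(r,f)`. -/
noncomputable def HpNorm (p : ℝ) (f : ℂ → ℂ) : ℝ :=
  ⨆ r : Set.Ioo (0:ℝ) 1, meanMp p f r


lemma triv_bound (n₁ n₂ : ℕ) (z : ℂ) (hz : ‖z‖ ≤ 1) :
    ‖∑ k ∈ Finset.Ico n₁ n₂, z ^ k‖ ≤ n₂ := by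
  calc ‖∑ k ∈ Finset.Ico n₁ n₂, z ^ k‖
      ≤ ∑ k ∈ Finset.Ico n₁ n₂, ‖z ^ k‖ := norm_sum_le _ _
    _ ≤ ∑ _k ∈ Finset.Ico n₁ n₂, 1 := by
        refine Finset.sum_le_sum fun k _ => ?_
        rw [norm_pow]
        exact pow_le_one₀ (norm_nonneg z) hz
    _ ≤ n₂ := by
        simp only [Finset.sum_const, Nat.card_Ico, nsmul_eq_mul, mul_one]
        exact_mod_cast Nat.sub_le n₂ n₁

lemma denom_bound (r θ : ℝ) (hr : r ∈ Set.Ioo (0:ℝ) 1) (hθ : θ ∈ Set.Icc (0:ℝ) (2*π)) :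
    min θ (2*π - θ) / (2*π) ≤ ‖1 - (r:ℂ) * Complex.exp (θ * Complex.I)‖ := by
  obtain ⟨hr0, hr1⟩ := hr
  obtain ⟨hθ0, hθ2⟩ := hθ
  have hπ := Real.pi_pos
  set s := Real.sin (θ/2) with hs
  have hs0 : 0 ≤ s := Real.sin_nonneg_of_nonneg_of_le_pi (by linarith) (by linarith)
  have hs1 : s ≤ 1 := Real.sin_le_one _
  have habs2 : (‖1 - (r:ℂ) * Complex.exp (θ * Complex.I)‖)^2
      = (1 - r * Real.cos θ)^2 + (r * Real.sin θ)^2 := by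
    rw [Complex.sq_norm, Complex.normSq_apply]
    simp [Complex.exp_ofReal_mul_I_re, Complex.exp_ofReal_mul_I_im]
    ring
  have hcos : Real.cos θ = 1 - 2 * s^2 := by
    have h := Real.sin_sq_eq_half_sub (θ/2)
    rw [show 2 * (θ/2) = θ by ring] at h
    rw [hs]; linarith
  have hsin2 : (Real.sin θ)^2 = 1 - (Real.cos θ)^2 := by
    have := Real.sin_sq_add_cos_sq θ; linarith
  -- |1-z|^2 ≥ s^2/4
  have key : (s/2)^2 ≤ (‖1 - (r:ℂ) * Complex.exp (θ * Complex.I)‖)^2 := by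
    rw [habs2]
    have expand : (1 - r * Real.cos θ)^2 + (r * Real.sin θ)^2 = (1-r)^2 + 4*r*s^2 := by
      have : (r * Real.sin θ)^2 = r^2 * (1 - (Real.cos θ)^2) := by rw [mul_pow, hsin2]
      rw [this, hcos]; ring
    rw [expand]
    rcases le_or_gt (1/2 : ℝ) r with h | h
    · nlinarith
    · nlinarith
  have key2 : s/2 ≤ ‖1 - (r:ℂ) * Complex.exp (θ * Complex.I)‖ := by
    have := norm_nonneg (1 - (r:ℂ) * Complex.exp (θ * Complex.I))
    nlinarith
  -- s ≥ min θ (2π-θ) / π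
  have hmin : min θ (2*π - θ) / π ≤ s := by
    rcases le_or_gt (θ/2) (π/2) with h | h
    · have h2 : θ/π ≤ s := by
        rw [hs]
        calc θ/π = 2/π*(θ/2) := by ring
          _ ≤ _ := Real.mul_le_sin (by linarith) h
      have hm : min θ (2*π-θ)/π ≤ θ/π := by gcongr; exact min_le_left _ _
      linarith
    · have heq : s = Real.sin (π - θ/2) := by rw [hs, Real.sin_pi_sub]
      have h2 : (2*π-θ)/π ≤ s := by
        rw [heq]
        calc (2*π-θ)/π = 2/π*(π - θ/2) := by ring
          _ ≤ _ := Real.mul_le_sin (by linarith) (by linarith)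
      have hm : min θ (2*π-θ)/π ≤ (2*π-θ)/π := by gcongr; exact min_le_right _ _
      linarith
  calc min θ (2*π - θ) / (2*π) = (min θ (2*π-θ)/π)/2 := by ring
    _ ≤ s/2 := by linarith
    _ ≤ _ := key2

lemma geom_bound (n₁ n₂ : ℕ) (h : n₁ ≤ n₂) (z : ℂ) (hz : ‖z‖ < 1) :
    ‖∑ k ∈ Finset.Ico n₁ n₂, z ^ k‖ ≤ 2 / ‖1 - z‖ := by
  have hz1 : z ≠ 1 := by
    intro h'; rw [h'] at hz; simp at hz
  have h1z : (0:ℝ) < ‖1 - z‖ := by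
    rw [norm_pos_iff]
    intro h'; apply hz1; linear_combination -h'
  rw [geom_sum_Ico hz1 h, norm_div]
  have hrev : ‖z - 1‖ = ‖1 - z‖ := by
    rw [show z - 1 = -(1-z) by ring, norm_neg]
  rw [hrev]
  gcongr
  calc ‖z ^ n₂ - z ^ n₁‖ ≤ ‖z ^ n₂‖ + ‖z ^ n₁‖ := by
        exact norm_sub_le _ _
    _ ≤ 1 + 1 := by
        rw [norm_pow, norm_pow]
        gcongr <;> first
          | exact pow_le_one₀ (norm_nonneg z) hz.le
    _ = 2 := by norm_num

lemma cont_integrand (p : ℝ) (hp : 0 ≤ p) (n₁ n₂ : ℕ) (r : ℝ) :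
    Continuous fun θ : ℝ =>
      ‖∑ k ∈ Finset.Ico n₁ n₂, ((r:ℂ) * Complex.exp (θ * Complex.I)) ^ k‖ ^ p := by
  apply (Real.continuous_rpow_const hp).comp
  apply continuous_norm.comp
  apply continuous_finset_sum
  intro k _
  apply Continuous.pow
  exact continuous_const.mul (Complex.continuous_exp.comp
    (Complex.continuous_ofReal.mul continuous_const))

lemma upper_integral (p : ℝ) (hp : 1 < p) (n₁ n₂ : ℕ) (h12 : n₁ ≤ n₂) (h4 : 4 ≤ n₂)
    (r : ℝ) (hr : r ∈ Set.Ioo (0:ℝ) 1) :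
    (∫ θ in (0:ℝ)..2*π,
        ‖∑ k ∈ Finset.Ico n₁ n₂, ((r:ℂ) * Complex.exp (θ * Complex.I)) ^ k‖ ^ p)
      ≤ (8*π + 8*π/(p-1)) * (n₂:ℝ)^(p-1) := by
  have hπ := Real.pi_pos
  have hp0 : (0:ℝ) ≤ p := by linarith
  have hn₂ : (0:ℝ) < n₂ := by positivity
  set F : ℝ → ℝ := fun θ =>
    ‖∑ k ∈ Finset.Ico n₁ n₂, ((r:ℂ) * Complex.exp (θ * Complex.I)) ^ k‖ ^ p with hF
  have hFcont : Continuous F := by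
    apply (Real.continuous_rpow_const hp0).comp
    apply continuous_norm.comp
    apply continuous_finset_sum
    intro k _
    exact (continuous_const.mul (Complex.continuous_exp.comp
      (Complex.continuous_ofReal.mul continuous_const))).pow k
  have hF0 : ∀ θ, 0 ≤ F θ := fun θ => Real.rpow_nonneg (norm_nonneg _) p
  set a : ℝ := 4*π/n₂ with ha
  have ha0 : 0 < a := by positivity
  have han : (4:ℝ) ≤ n₂ := by exact_mod_cast h4
  have haπ : a ≤ π := by
    rw [ha, div_le_iff₀ hn₂]; nlinarith
  have hatot : a ≤ 2*π - a := by linarith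
  -- trivial pointwise bound
  have htriv : ∀ θ : ℝ, F θ ≤ (n₂:ℝ)^p := by
    intro θ
    apply Real.rpow_le_rpow (norm_nonneg _) _ hp0
    apply triv_bound
    rw [norm_mul, Complex.norm_real, Real.norm_eq_abs, Complex.norm_exp_ofReal_mul_I, mul_one,
      abs_of_pos hr.1]
    exact hr.2.le
  -- middle pointwise bound
  have hmid : ∀ θ ∈ Set.Icc a (2*π - a),
      F θ ≤ (4*π/θ)^p + (4*π/(2*π-θ))^p := by
    intro θ hθ
    have hθ0 : 0 < θ := lt_of_lt_of_le ha0 hθ.1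
    have hθ2 : 0 < 2*π - θ := lt_of_lt_of_le ha0 (by linarith [hθ.2])
    have hzabs : ‖(r:ℂ) * Complex.exp (θ * Complex.I)‖ < 1 := by
      rw [norm_mul, Complex.norm_real, Real.norm_eq_abs, Complex.norm_exp_ofReal_mul_I, mul_one,
        abs_of_pos hr.1]
      exact hr.2
    have h1 := geom_bound n₁ n₂ h12 _ hzabs
    have h2 := denom_bound r θ hr ⟨hθ0.le, by linarith⟩
    have hm0 : 0 < min θ (2*π - θ) := lt_min hθ0 hθ2
    have h3 : ‖∑ k ∈ Finset.Ico n₁ n₂, ((r:ℂ) * Complex.exp (θ * Complex.I)) ^ k‖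
        ≤ 4*π / min θ (2*π-θ) := by
      refine h1.trans ?_
      have h4' : 0 < ‖1 - (r:ℂ) * Complex.exp (θ * Complex.I)‖ :=
        lt_of_lt_of_le (by positivity) h2
      rw [div_le_div_iff₀ h4' hm0]
      calc 2 * min θ (2*π-θ) = 4*π * (min θ (2*π-θ) / (2*π)) := by field_simp; ring
        _ ≤ 4*π * ‖1 - (r:ℂ) * Complex.exp (θ * Complex.I)‖ := by
            gcongr
    have h5 : F θ ≤ (4*π / min θ (2*π-θ))^p :=
      Real.rpow_le_rpow (norm_nonneg _) h3 hp0
    refine h5.trans ?_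
    rcases min_cases θ (2*π-θ) with ⟨hmin, _⟩ | ⟨hmin, _⟩ <;> rw [hmin]
    · have : (0:ℝ) ≤ (4*π/(2*π-θ))^p := Real.rpow_nonneg (by positivity) p
      linarith
    · have : (0:ℝ) ≤ (4*π/θ)^p := Real.rpow_nonneg (by positivity) p
      linarith
  -- split integral
  have hi1 : IntervalIntegrable F volume 0 a := hFcont.intervalIntegrable _ _
  have hi2 : IntervalIntegrable F volume a (2*π-a) := hFcont.intervalIntegrable _ _
  have hi3 : IntervalIntegrable F volume (2*π-a) (2*π) := hFcont.intervalIntegrable _ _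
  have hsplit : (∫ θ in (0:ℝ)..2*π, F θ)
      = (∫ θ in (0:ℝ)..a, F θ) + (∫ θ in a..(2*π-a), F θ) + (∫ θ in (2*π-a)..(2*π), F θ) := by
    rw [← intervalIntegral.integral_add_adjacent_intervals (hi1.trans hi2) hi3,
      ← intervalIntegral.integral_add_adjacent_intervals hi1 hi2]
  -- end pieces
  have hend1 : (∫ θ in (0:ℝ)..a, F θ) ≤ 4*π * (n₂:ℝ)^(p-1) := by
    calc (∫ θ in (0:ℝ)..a, F θ) ≤ ∫ _θ in (0:ℝ)..a, (n₂:ℝ)^p := by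
          apply integral_mono_on ha0.le (hFcont.intervalIntegrable _ _)
            (intervalIntegrable_const)
          exact fun θ _ => htriv θ
      _ = a * (n₂:ℝ)^p := by rw [intervalIntegral.integral_const, smul_eq_mul, sub_zero]
      _ = 4*π * (n₂:ℝ)^(p-1) := by
          rw [ha, show p = (p-1)+1 by ring, Real.rpow_add_one hn₂.ne']
          rw [show (p-1)+1-1 = p-1 by ring]
          field_simp
  have hend3 : (∫ θ in (2*π-a)..(2*π), F θ) ≤ 4*π * (n₂:ℝ)^(p-1) := by
    calc (∫ θ in (2*π-a)..(2*π), F θ) ≤ ∫ _θ in (2*π-a)..(2*π), (n₂:ℝ)^p := by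
          apply integral_mono_on (by linarith) (hFcont.intervalIntegrable _ _)
            (intervalIntegrable_const)
          exact fun θ _ => htriv θ
      _ = a * (n₂:ℝ)^p := by rw [intervalIntegral.integral_const, smul_eq_mul]; ring_nf
      _ = 4*π * (n₂:ℝ)^(p-1) := by
          rw [ha, show p = (p-1)+1 by ring, Real.rpow_add_one hn₂.ne']
          rw [show (p-1)+1-1 = p-1 by ring]
          field_simp
  -- the model integral
  have hmodel : (∫ θ in a..(2*π-a), (4*π/θ)^p) ≤ 4*π/(p-1) * (n₂:ℝ)^(p-1) := by
    have hcong : (∫ θ in a..(2*π-a), (4*π/θ)^p) = (4*π)^p * ∫ θ in a..(2*π-a), θ^(-p) := by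
      rw [← intervalIntegral.integral_const_mul]
      apply integral_congr
      intro θ hθ
      rw [Set.uIcc_of_le hatot] at hθ
      have hθ0 : 0 < θ := lt_of_lt_of_le ha0 hθ.1
      show (4*π/θ)^p = (4*π)^p * θ^(-p)
      rw [Real.div_rpow (by positivity) hθ0.le, Real.rpow_neg hθ0.le, div_eq_mul_inv]
    rw [hcong]
    have hnotin : (0:ℝ) ∉ Set.uIcc a (2*π-a) := by
      rw [Set.uIcc_of_le hatot]
      intro hmem
      exact absurd hmem.1 (by linarith)
    rw [integral_rpow (Or.inr ⟨by intro h; apply hp.ne'; linarith, hnotin⟩)]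
    have hkey : ((2*π-a)^(-p+1) - a^(-p+1)) / (-p+1) ≤ a^(-p+1)/(p-1) := by
      have h2a : (0:ℝ) ≤ (2*π-a)^(-p+1) := Real.rpow_nonneg (by linarith) _
      have haa : (0:ℝ) ≤ a^(-p+1) := Real.rpow_nonneg ha0.le _
      have heq : ((2*π-a)^(-p+1) - a^(-p+1)) / (-p+1)
          = (a^(-p+1) - (2*π-a)^(-p+1)) / (p-1) := by
        rw [div_eq_div_iff (by linarith : (-p+1 : ℝ) ≠ 0) (by linarith : (p-1:ℝ) ≠ 0)]
        ring
      rw [heq]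
      gcongr
      · linarith
    have h4πp : (0:ℝ) < (4*π)^p := Real.rpow_pos_of_pos (by positivity) p
    calc (4*π)^p * (((2*π-a)^(-p+1) - a^(-p+1)) / (-p+1)) ≤ (4*π)^p * (a^(-p+1)/(p-1)) := by
          gcongr
      _ = 4*π/(p-1) * (n₂:ℝ)^(p-1) := by
          have he : ((4*π/(n₂:ℝ)))^(-p+1) = (4*π)^(-p+1) * (n₂:ℝ)^(p-1) := by
            rw [Real.div_rpow (by positivity) hn₂.le, div_eq_mul_inv, ← Real.rpow_neg hn₂.le,
              show -(-p+1) = p-1 by ring]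
          have h44 : (4*π)^p * (4*π)^(-p+1) = 4*π := by
            rw [← Real.rpow_add (by positivity), show p + (-p+1) = 1 by ring, Real.rpow_one]
          rw [ha, he]
          calc (4*π)^p * ((4*π)^(-p+1) * (n₂:ℝ)^(p-1) / (p-1))
              = ((4*π)^p * (4*π)^(-p+1)) * (n₂:ℝ)^(p-1) / (p-1) := by ring
            _ = 4*π * (n₂:ℝ)^(p-1) / (p-1) := by rw [h44]
            _ = 4*π/(p-1) * (n₂:ℝ)^(p-1) := by ring
  -- continuity of model integrands on the middle interval
  have hcont1 : ContinuousOn (fun θ : ℝ => (4*π/θ)^p) (Set.uIcc a (2*π-a)) := by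
    rw [Set.uIcc_of_le hatot]
    apply ContinuousOn.rpow_const
    · exact continuousOn_const.div continuousOn_id
        (fun x hx => ne_of_gt (lt_of_lt_of_le ha0 hx.1))
    · exact fun x _ => Or.inr hp0
  have hcont2 : ContinuousOn (fun θ : ℝ => (4*π/(2*π-θ))^p) (Set.uIcc a (2*π-a)) := by
    rw [Set.uIcc_of_le hatot]
    apply ContinuousOn.rpow_const
    · refine continuousOn_const.div (continuousOn_const.sub continuousOn_id) ?_
      intro x hx
      have : a ≤ 2*π - x := by linarith [hx.2]
      exact ne_of_gt (lt_of_lt_of_le ha0 this)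
    · exact fun x _ => Or.inr hp0
  have hsub : (∫ θ in a..(2*π-a), (4*π/(2*π-θ))^p) = ∫ θ in a..(2*π-a), (4*π/θ)^p := by
    have h := intervalIntegral.integral_comp_sub_left (a := a) (b := 2*π-a)
      (fun u : ℝ => (4*π/u)^p) (2*π)
    rw [show 2*π - (2*π - a) = a by ring, show 2*π - a = 2*π - a from rfl] at h
    exact h
  have hmidint : (∫ θ in a..(2*π-a), F θ) ≤ 8*π/(p-1) * (n₂:ℝ)^(p-1) := by
    calc (∫ θ in a..(2*π-a), F θ)
        ≤ ∫ θ in a..(2*π-a), ((4*π/θ)^p + (4*π/(2*π-θ))^p) := by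
          apply integral_mono_on hatot hi2
            ((hcont1.add hcont2).intervalIntegrable)
          exact hmid
      _ = (∫ θ in a..(2*π-a), (4*π/θ)^p) + ∫ θ in a..(2*π-a), (4*π/(2*π-θ))^p :=
          integral_add (hcont1.intervalIntegrable) (hcont2.intervalIntegrable)
      _ = 2 * ∫ θ in a..(2*π-a), (4*π/θ)^p := by rw [hsub]; ring
      _ ≤ 2 * (4*π/(p-1) * (n₂:ℝ)^(p-1)) := by
          have h2 : (0:ℝ) ≤ 2 := by norm_num
          exact mul_le_mul_of_nonneg_left hmodel h2
      _ = 8*π/(p-1) * (n₂:ℝ)^(p-1) := by ring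
  rw [hsplit]
  calc (∫ θ in (0:ℝ)..a, F θ) + (∫ θ in a..(2*π-a), F θ) + (∫ θ in (2*π-a)..(2*π), F θ)
      ≤ 4*π * (n₂:ℝ)^(p-1) + 8*π/(p-1) * (n₂:ℝ)^(p-1) + 4*π * (n₂:ℝ)^(p-1) := by
        gcongr
    _ = (8*π + 8*π/(p-1)) * (n₂:ℝ)^(p-1) := by ring

lemma lower_integral (p : ℝ) (hp : 1 < p) (n₁ n₂ : ℕ) (h2 : 2 ≤ n₂) (hlt : n₁ < n₂) :
    (1/(n₂:ℝ)) * (((n₂:ℝ)-(n₁:ℝ))/4)^p ≤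
      ∫ θ in (0:ℝ)..2*π,
        ‖∑ k ∈ Finset.Ico n₁ n₂,
          ((((1 - 1/(2*(n₂:ℝ)) : ℝ)):ℂ) * Complex.exp (θ * Complex.I)) ^ k‖ ^ p := by
  have hπ := Real.pi_pos
  have hp0 : (0:ℝ) ≤ p := by linarith
  have hn₂ : (0:ℝ) < n₂ := by positivity
  have hn₂2 : (2:ℝ) ≤ n₂ := by exact_mod_cast h2
  set r : ℝ := 1 - 1/(2*(n₂:ℝ)) with hrdef
  have hr0 : 0 < r := by
    rw [hrdef]
    have : 1/(2*(n₂:ℝ)) ≤ 1/4 := by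
      apply div_le_div_of_nonneg_left <;> linarith
    linarith
  have hr1 : r < 1 := by
    rw [hrdef]
    have : 0 < 1/(2*(n₂:ℝ)) := by positivity
    linarith
  set F : ℝ → ℝ := fun θ =>
    ‖∑ k ∈ Finset.Ico n₁ n₂, ((r:ℂ) * Complex.exp (θ * Complex.I)) ^ k‖ ^ p with hF
  have hFcont : Continuous F := by
    apply (Real.continuous_rpow_const hp0).comp
    apply continuous_norm.comp
    apply continuous_finset_sum
    intro k _
    exact (continuous_const.mul (Complex.continuous_exp.comp
      (Complex.continuous_ofReal.mul continuous_const))).pow k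
  have hF0 : ∀ θ, 0 ≤ F θ := fun θ => Real.rpow_nonneg (norm_nonneg _) p
  -- r^n₂ ≥ 1/2
  have hrpow : ∀ k ∈ Finset.Ico n₁ n₂, (1/2 : ℝ) ≤ r ^ k := by
    intro k hk
    have hk2 : k ≤ n₂ := (Finset.mem_Ico.1 hk).2.le
    have h1 : r ^ n₂ ≤ r ^ k := pow_le_pow_of_le_one hr0.le hr1.le hk2
    have h2' : (1/2 : ℝ) ≤ r ^ n₂ := by
      have hd1 : (1:ℝ)/(2*(n₂:ℝ)) ≤ 1 := by
        rw [div_le_one (by positivity)]; linarith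
      have hb := one_add_mul_le_pow (a := -(1/(2*(n₂:ℝ)))) (by linarith) n₂
      have he : (1 + -(1/(2*(n₂:ℝ)))) = r := by rw [hrdef]; ring
      rw [he] at hb
      have hhalf : (n₂:ℝ) * (1/(2*(n₂:ℝ))) = 1/2 := by
        rw [mul_one_div, div_eq_div_iff (by positivity) (by norm_num : (2:ℝ) ≠ 0)]
        ring
      have hexp : 1 + (n₂:ℝ) * -(1/(2*(n₂:ℝ))) = 1/2 := by
        rw [mul_neg, hhalf]; ring
      linarith [hb]
    linarith
  -- cos bound
  have hcos1 : (1/2 : ℝ) ≤ Real.cos 1 := by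
    have h3 : (1:ℝ) ≤ π/3 := by linarith [Real.pi_gt_three]
    have := Real.cos_le_cos_of_nonneg_of_le_pi (by norm_num) (by linarith) h3
    rw [Real.cos_pi_div_three] at this
    linarith
  -- pointwise lower bound on [0, 1/n₂]
  have hpt : ∀ θ ∈ Set.Icc (0:ℝ) (1/(n₂:ℝ)),
      (((n₂:ℝ)-(n₁:ℝ))/4)^p ≤ F θ := by
    intro θ hθ
    have hre : ((n₂:ℝ)-(n₁:ℝ))/4 ≤
        (∑ k ∈ Finset.Ico n₁ n₂, ((r:ℂ) * Complex.exp (θ * Complex.I)) ^ k).re := by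
      rw [Complex.re_sum]
      have hterm : ∀ k ∈ Finset.Ico n₁ n₂,
          (1/4 : ℝ) ≤ (((r:ℂ) * Complex.exp (θ * Complex.I)) ^ k).re := by
        intro k hk
        have hkn : k < n₂ := (Finset.mem_Ico.1 hk).2
        have hzk : ((r:ℂ) * Complex.exp (θ * Complex.I)) ^ k
            = ((r^k : ℝ) : ℂ) * Complex.exp (((k*θ : ℝ)) * Complex.I) := by
          rw [mul_pow, ← Complex.exp_nat_mul]
          push_cast
          ring_nf
        rw [hzk]
        have hre2 : (((r^k : ℝ) : ℂ) * Complex.exp (((k*θ : ℝ)) * Complex.I)).re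
            = r^k * Real.cos (k*θ) := by
          rw [Complex.re_ofReal_mul, Complex.exp_ofReal_mul_I_re]
        rw [hre2]
        have hkθ0 : 0 ≤ (k:ℝ)*θ := mul_nonneg (Nat.cast_nonneg k) hθ.1
        have hkθ1 : (k:ℝ)*θ ≤ 1 := by
          have hk' : (k:ℝ) ≤ n₂ := by exact_mod_cast hkn.le
          have := hθ.2
          calc (k:ℝ)*θ ≤ (n₂:ℝ) * (1/(n₂:ℝ)) := by
                apply mul_le_mul hk' this hθ.1 hn₂.le
            _ = 1 := by field_simp
        have hcosk : (1/2:ℝ) ≤ Real.cos ((k:ℝ)*θ) := by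
          have := Real.cos_le_cos_of_nonneg_of_le_pi hkθ0 (by linarith [Real.pi_gt_three]) hkθ1
          linarith
        have := hrpow k hk
        nlinarith
      calc ((n₂:ℝ)-(n₁:ℝ))/4 = ∑ _k ∈ Finset.Ico n₁ n₂, (1/4 : ℝ) := by
            rw [Finset.sum_const, Nat.card_Ico, nsmul_eq_mul]
            rw [Nat.cast_sub hlt.le]
            ring
        _ ≤ _ := Finset.sum_le_sum hterm
    have habs : ((n₂:ℝ)-(n₁:ℝ))/4 ≤
        ‖∑ k ∈ Finset.Ico n₁ n₂, ((r:ℂ) * Complex.exp (θ * Complex.I)) ^ k‖ :=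
      hre.trans (Complex.re_le_norm _)
    exact Real.rpow_le_rpow (by
      have hn₁n₂ : (n₁:ℝ) < n₂ := by exact_mod_cast hlt
      linarith) habs hp0
  have h1n : 1/(n₂:ℝ) ≤ 2*π := by
    have : 1/(n₂:ℝ) ≤ 1 := by
      rw [div_le_one hn₂]; linarith
    linarith [Real.pi_gt_three]
  have hsplit : (∫ θ in (0:ℝ)..2*π, F θ)
      = (∫ θ in (0:ℝ)..(1/(n₂:ℝ)), F θ) + ∫ θ in (1/(n₂:ℝ))..(2*π), F θ := by
    rw [intervalIntegral.integral_add_adjacent_intervals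
      (hFcont.intervalIntegrable _ _) (hFcont.intervalIntegrable _ _)]
  have hpos : 0 ≤ ∫ θ in (1/(n₂:ℝ))..(2*π), F θ :=
    intervalIntegral.integral_nonneg h1n (fun x _ => hF0 x)
  have hlow : (1/(n₂:ℝ)) * (((n₂:ℝ)-(n₁:ℝ))/4)^p ≤ ∫ θ in (0:ℝ)..(1/(n₂:ℝ)), F θ := by
    calc (1/(n₂:ℝ)) * (((n₂:ℝ)-(n₁:ℝ))/4)^p
        = ∫ _θ in (0:ℝ)..(1/(n₂:ℝ)), (((n₂:ℝ)-(n₁:ℝ))/4)^p := by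
          rw [intervalIntegral.integral_const, smul_eq_mul, sub_zero]
      _ ≤ _ := by
          apply intervalIntegral.integral_mono_on (by positivity)
            intervalIntegrable_const (hFcont.intervalIntegrable _ _)
          exact hpt
  rw [hsplit]
  linarith
lemma rpow_helper (p : ℝ) (hp : 1 < p) (A : ℝ) (hA : 0 ≤ A) (n : ℝ) (hn : 0 < n) :
    (A * n^(p-1))^(1/p) = A^(1/p) * n^((1:ℝ)-1/p) := by
  have hp0 : p ≠ 0 := by linarith
  rw [Real.mul_rpow hA (Real.rpow_nonneg hn.le _), ← Real.rpow_mul hn.le,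
    show (p-1)*(1/p) = 1-1/p by field_simp]

lemma integrand_nonneg (p : ℝ) (n₁ n₂ : ℕ) (r : ℝ) :
    0 ≤ ∫ θ in (0:ℝ)..2*π,
      ‖∑ k ∈ Finset.Ico n₁ n₂, ((r:ℂ) * Complex.exp (θ * Complex.I)) ^ k‖ ^ p := by
  apply intervalIntegral.integral_nonneg (by positivity : (0:ℝ) ≤ 2*π)
  exact fun x _ => Real.rpow_nonneg (norm_nonneg _) p

lemma meanMp_le_triv (p : ℝ) (hp : 1 < p) (n₁ n₂ : ℕ) (r : ℝ) (hr : r ∈ Set.Ioo (0:ℝ) 1) :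
    meanMp p (fun z => ∑ k ∈ Finset.Ico n₁ n₂, z ^ k) r ≤ n₂ := by
  have hπ := Real.pi_pos
  have hp0 : (0:ℝ) ≤ p := by linarith
  have hn₂ : (0:ℝ) ≤ n₂ := by positivity
  have hpinv : (0:ℝ) ≤ 1/p := by positivity
  simp only [meanMp]
  have hint : (∫ θ in (0:ℝ)..2*π,
      ‖∑ k ∈ Finset.Ico n₁ n₂, ((r:ℂ) * Complex.exp (θ * Complex.I)) ^ k‖ ^ p)
      ≤ 2*π * (n₂:ℝ)^p := by
    calc _ ≤ ∫ _θ in (0:ℝ)..2*π, (n₂:ℝ)^p := by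
          apply intervalIntegral.integral_mono_on (by positivity)
          · apply Continuous.intervalIntegrable
            apply (Real.continuous_rpow_const hp0).comp
            apply continuous_norm.comp
            apply continuous_finset_sum
            intro k _
            exact (continuous_const.mul (Complex.continuous_exp.comp
              (Complex.continuous_ofReal.mul continuous_const))).pow k
          · exact intervalIntegrable_const
          · intro θ _
            apply Real.rpow_le_rpow (norm_nonneg _) _ hp0
            apply triv_bound
            rw [norm_mul, Complex.norm_real, Real.norm_eq_abs, Complex.norm_exp_ofReal_mul_I, mul_one,
              abs_of_pos hr.1]
            exact hr.2.le
      _ = 2*π * (n₂:ℝ)^p := by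
          rw [intervalIntegral.integral_const, smul_eq_mul, sub_zero]
  calc ((1 / (2*π)) * ∫ θ in (0:ℝ)..2*π,
        ‖∑ k ∈ Finset.Ico n₁ n₂, ((r:ℂ) * Complex.exp (θ * Complex.I)) ^ k‖ ^ p) ^ (1/p)
      ≤ ((1 / (2*π)) * (2*π * (n₂:ℝ)^p)) ^ (1/p) := by
        apply Real.rpow_le_rpow _ _ hpinv
        · exact mul_nonneg (by positivity) (integrand_nonneg p n₁ n₂ r)
        · exact mul_le_mul_of_nonneg_left hint (by positivity)
    _ = ((n₂:ℝ)^p) ^ (1/p) := by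
        congr 1
        field_simp
    _ = (n₂:ℝ) := by
        rw [← Real.rpow_mul hn₂, mul_one_div_cancel (by linarith : p ≠ 0), Real.rpow_one]

theorem stmt6 (p C₁ C₂ : ℝ) (hp : 1 < p) (hC₁ : 1 < C₁) (hC : C₁ ≤ C₂) :
    ∃ c₁ c₂ : ℝ, 0 < c₁ ∧ 0 < c₂ ∧
      ∀ n₁ n₂ : ℕ, 0 < n₁ → C₁ ≤ (n₂ : ℝ) / (n₁ : ℝ) → (n₂ : ℝ) / (n₁ : ℝ) ≤ C₂ →
        c₁ * (n₂ : ℝ) ^ ((1:ℝ) - 1 / p) ≤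
            HpNorm p (fun z => ∑ k ∈ Finset.Ico n₁ n₂, z ^ k) ∧
          HpNorm p (fun z => ∑ k ∈ Finset.Ico n₁ n₂, z ^ k) ≤
            c₂ * (n₂ : ℝ) ^ ((1:ℝ) - 1 / p) := by
  have hπ := Real.pi_pos
  have hp0 : (0:ℝ) < p := by linarith
  have hpinv : (0:ℝ) ≤ 1/p := by positivity
  set β : ℝ := (1 - 1/C₁)/4 with hβ
  have hβ0 : 0 < β := by
    have : 1/C₁ < 1 := by rw [div_lt_one (by linarith)]; linarith
    rw [hβ]; linarith
  set K : ℝ := 8*π + 8*π/(p-1) with hK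
  have hK0 : 0 < K := by
    rw [hK]
    have := div_pos (show (0:ℝ) < 8*π by positivity) (show (0:ℝ) < p-1 by linarith)
    linarith
  refine ⟨(β^p/(2*π))^(1/p), max 4 ((K/(2*π))^(1/p)), ?_, ?_, ?_⟩
  · exact Real.rpow_pos_of_pos (div_pos (Real.rpow_pos_of_pos hβ0 p) (by linarith)) _
  · exact lt_max_of_lt_left (by norm_num)
  intro n₁ n₂ hn₁pos hC₁le hC₂le
  -- basic arithmetic facts
  have hn₁R : (0:ℝ) < n₁ := by exact_mod_cast hn₁pos
  have hkey : C₁ * n₁ ≤ (n₂:ℝ) := by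
    rw [le_div_iff₀ hn₁R] at hC₁le
    linarith
  have hn12R : (n₁:ℝ) < n₂ := by nlinarith [mul_pos (sub_pos.2 hC₁) hn₁R]
  have hn12 : n₁ < n₂ := by exact_mod_cast hn12R
  have hn₂2 : 2 ≤ n₂ := by omega
  have hn₂2R : (2:ℝ) ≤ n₂ := by exact_mod_cast hn₂2
  have hn₂0 : (0:ℝ) < n₂ := by linarith
  have hn₂1 : (1:ℝ) ≤ n₂ := by linarith
  have hgap : β * n₂ ≤ ((n₂:ℝ) - n₁)/4 := by
    have hn₁le : (n₁:ℝ) ≤ n₂/C₁ := by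
      rw [le_div_iff₀ (by linarith : (0:ℝ) < C₁)]
      nlinarith
    have : (n₂:ℝ)/C₁ = n₂ * (1/C₁) := by ring
    rw [hβ]
    have h1 : (n₂:ℝ) * (1/C₁) ≥ n₁ := by rw [← this]; exact hn₁le
    nlinarith
  set f : ℂ → ℂ := fun z => ∑ k ∈ Finset.Ico n₁ n₂, z ^ k with hf
  haveI : Nonempty (Set.Ioo (0:ℝ) 1) := ⟨⟨1/2, by norm_num⟩⟩
  have hbdd : BddAbove (Set.range fun r : Set.Ioo (0:ℝ) 1 => meanMp p f r) := by
    refine ⟨(n₂:ℝ), ?_⟩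
    rintro x ⟨r, rfl⟩
    exact meanMp_le_triv p hp n₁ n₂ r r.2
  constructor
  · -- lower bound
    set r : ℝ := 1 - 1/(2*(n₂:ℝ)) with hrdef
    have hrIoo : r ∈ Set.Ioo (0:ℝ) 1 := by
      constructor
      · have : 1/(2*(n₂:ℝ)) ≤ 1/4 := by
          apply div_le_div_of_nonneg_left <;> linarith
        rw [hrdef]; linarith
      · have : 0 < 1/(2*(n₂:ℝ)) := by positivity
        rw [hrdef]; linarith
    have hle : meanMp p f r ≤ HpNorm p f := le_ciSup hbdd ⟨r, hrIoo⟩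
    refine le_trans ?_ hle
    have hLI := lower_integral p hp n₁ n₂ hn₂2 hn12
    have hstep1 : (β^p/(2*π)) * (n₂:ℝ)^(p-1)
        ≤ (1/(2*π)) * ((1/(n₂:ℝ)) * (((n₂:ℝ)-(n₁:ℝ))/4)^p) := by
      have h1 : β^p * (n₂:ℝ)^(p-1) ≤ (1/(n₂:ℝ)) * (((n₂:ℝ)-(n₁:ℝ))/4)^p := by
        have h2 : (β * n₂)^p ≤ (((n₂:ℝ)-(n₁:ℝ))/4)^p :=
          Real.rpow_le_rpow (by positivity) hgap (by linarith)
        have h3 : (β * n₂)^p = β^p * (n₂:ℝ)^p := Real.mul_rpow hβ0.le hn₂0.le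
        have h4 : (n₂:ℝ)^(p-1) = (n₂:ℝ)^p / n₂ := by
          rw [Real.rpow_sub hn₂0, Real.rpow_one]
        rw [h4]
        calc β^p * ((n₂:ℝ)^p / n₂) = (1/(n₂:ℝ)) * (β^p * (n₂:ℝ)^p) := by ring
          _ ≤ (1/(n₂:ℝ)) * (((n₂:ℝ)-(n₁:ℝ))/4)^p := by
              rw [← h3]
              exact mul_le_mul_of_nonneg_left h2 (by positivity)
      calc (β^p/(2*π)) * (n₂:ℝ)^(p-1) = (1/(2*π)) * (β^p * (n₂:ℝ)^(p-1)) := by ring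
        _ ≤ _ := mul_le_mul_of_nonneg_left h1 (by positivity)
    calc (β^p/(2*π))^(1/p) * (n₂:ℝ)^((1:ℝ)-1/p)
        = ((β^p/(2*π)) * (n₂:ℝ)^(p-1))^(1/p) := (rpow_helper p hp _ (by positivity) _ hn₂0).symm
      _ ≤ ((1/(2*π)) * ((1/(n₂:ℝ)) * (((n₂:ℝ)-(n₁:ℝ))/4)^p))^(1/p) := by
          apply Real.rpow_le_rpow (by positivity) hstep1 hpinv
      _ ≤ meanMp p f r := by
          simp only [meanMp, hf]
          apply Real.rpow_le_rpow _ _ hpinv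
          · exact mul_nonneg (by positivity) (mul_nonneg (by positivity)
              (Real.rpow_nonneg (by linarith) p))
          · exact mul_le_mul_of_nonneg_left hLI (by positivity)
  · -- upper bound
    apply ciSup_le
    rintro ⟨r, hr⟩
    rcases lt_or_ge n₂ 4 with h4 | h4
    · -- small n₂
      have hsm : (n₂:ℝ) ≤ 4 := by exact_mod_cast h4.le
      have h1 : meanMp p f r ≤ n₂ := meanMp_le_triv p hp n₁ n₂ r hr
      refine h1.trans ?_
      have h2 : (n₂:ℝ) = (n₂:ℝ)^(1/p) * (n₂:ℝ)^((1:ℝ)-1/p) := by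
        rw [← Real.rpow_add hn₂0, show 1/p + (1-1/p) = 1 by ring, Real.rpow_one]
      have h3 : (n₂:ℝ)^(1/p) ≤ 4 := by
        calc (n₂:ℝ)^(1/p) ≤ (n₂:ℝ)^(1:ℝ) := by
              apply Real.rpow_le_rpow_of_exponent_le hn₂1
              rw [div_le_one hp0]; linarith
          _ = n₂ := Real.rpow_one _
          _ ≤ 4 := hsm
      calc (n₂:ℝ) = (n₂:ℝ)^(1/p) * (n₂:ℝ)^((1:ℝ)-1/p) := h2
        _ ≤ (max 4 ((K/(2*π))^(1/p))) * (n₂:ℝ)^((1:ℝ)-1/p) := by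
            apply mul_le_mul (h3.trans (le_max_left _ _)) le_rfl
              (Real.rpow_nonneg hn₂0.le _) (by positivity)
    · -- large n₂
      have hUI := upper_integral p hp n₁ n₂ hn12.le h4 r hr
      have hstep : meanMp p f r ≤ ((K/(2*π)) * (n₂:ℝ)^(p-1))^(1/p) := by
        simp only [meanMp, hf]
        apply Real.rpow_le_rpow _ _ hpinv
        · exact mul_nonneg (by positivity) (integrand_nonneg p n₁ n₂ r)
        · calc (1/(2*π)) * ∫ θ in (0:ℝ)..2*π,
                ‖∑ k ∈ Finset.Ico n₁ n₂,
                  ((r:ℂ) * Complex.exp (θ * Complex.I)) ^ k‖ ^ p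
              ≤ (1/(2*π)) * (K * (n₂:ℝ)^(p-1)) :=
                mul_le_mul_of_nonneg_left hUI (by positivity)
            _ = (K/(2*π)) * (n₂:ℝ)^(p-1) := by ring
      refine hstep.trans ?_
      rw [rpow_helper p hp _ (by positivity) _ hn₂0]
      apply mul_le_mul (le_max_right _ _) le_rfl (Real.rpow_nonneg hn₂0.le _) (by positivity)
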